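/- arXiv:0911.2692 — 5 statements merged into one kernel-verified Lean document; each statement's English description precedes it below -/
import Mathlib

section
/- Tverberg's theorem in dimension 1: any finite set of 2r-1 real numbers can be partitioned into r pairwise disjoint subsets whose convex hulls (intervals) have a common point. -/
/-- Tverberg's theorem in dimension 1: any multiset of `2r-1` real numbers (given as a
function on `Fin (2r-1)`) can be partitioned into `r` pairwise disjoint subsets whose
convex hulls have a common point. -/
theorem tverberg_dim_one (r : ℕ) (hr : 1 ≤ r) (f : Fin (2 * r - 1) → ℝ) :
    ∃ F : Fin r → Finset (Fin (2 * r - 1)),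
      (∀ j k, j ≠ k → Disjoint (F j) (F k)) ∧
      (Finset.univ.biUnion F = Finset.univ) ∧
      ∃ p : ℝ, ∀ j, p ∈ convexHull ℝ (f '' (F j : Set (Fin (2 * r - 1)))) := by
  set σ := Tuple.sort f with hσ
  have hmono : Monotone (f ∘ σ) := Tuple.monotone_sort f
  have hlt1 : ∀ j : Fin r, (j : ℕ) < 2 * r - 1 := fun j => by
    have := j.isLt; omega
  have hlt2 : ∀ j : Fin r, 2 * r - 2 - (j : ℕ) < 2 * r - 1 := fun j => by
    have := j.isLt; omega
  set a : Fin r → Fin (2 * r - 1) := fun j => ⟨j, hlt1 j⟩ with ha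
  set b : Fin r → Fin (2 * r - 1) := fun j => ⟨2 * r - 2 - j, hlt2 j⟩ with hb
  refine ⟨fun j => {σ (a j), σ (b j)}, ?_, ?_, ?_⟩
  · intro j k hjk
    simp only [Finset.disjoint_insert_left, Finset.disjoint_singleton,
      Finset.disjoint_insert_right, Finset.mem_insert, Finset.mem_singleton]
    have hja := j.isLt; have hka := k.isLt
    have hne : (j : ℕ) ≠ k := fun h => hjk (Fin.ext h)
    constructor
    · push_neg
      constructor <;> intro h <;>
        · have := congrArg (fun x => (σ.symm x : ℕ)) h
          simp only [Equiv.symm_apply_apply, ha, hb] at this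
          omega
    · push_neg
      constructor <;> intro h <;>
        · have := congrArg (fun x => (σ.symm x : ℕ)) h
          simp only [Equiv.symm_apply_apply, ha, hb] at this
          omega
  · ext i
    simp only [Finset.mem_biUnion, Finset.mem_univ, true_iff, Finset.mem_insert,
      Finset.mem_singleton, iff_true]
    set v := (σ.symm i : ℕ) with hv
    have hvlt : v < 2 * r - 1 := (σ.symm i).isLt
    by_cases hcase : v ≤ r - 1
    · refine ⟨⟨v, by omega⟩, trivial, Or.inl ?_⟩
      have : a ⟨v, by omega⟩ = σ.symm i := Fin.ext rfl
      rw [this, Equiv.apply_symm_apply]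
    · refine ⟨⟨2 * r - 2 - v, by omega⟩, trivial, Or.inr ?_⟩
      have : b ⟨2 * r - 2 - v, by omega⟩ = σ.symm i := Fin.ext (by
        simp only [hb]; omega)
      rw [this, Equiv.apply_symm_apply]
  · refine ⟨f (σ ⟨r - 1, by omega⟩), fun j => ?_⟩
    have hj := j.isLt
    have h1 : f (σ (a j)) ≤ f (σ ⟨r - 1, by omega⟩) := hmono (by
      simp only [Fin.le_def, ha]; omega)
    have h2 : f (σ ⟨r - 1, by omega⟩) ≤ f (σ (b j)) := hmono (by
      simp only [Fin.le_def, hb]; omega)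
    have himg : f '' (({σ (a j), σ (b j)} : Finset (Fin (2 * r - 1))) : Set (Fin (2 * r - 1)))
        = {f (σ (a j)), f (σ (b j))} := by
      simp [Set.image_insert_eq]
    rw [himg, convexHull_pair, segment_eq_Icc (le_trans h1 h2)]
    exact ⟨h1, h2⟩
end

section
/- Colored Tverberg in dimension 1 for prime r: let C ⊂ ℝ be a set of 2(r-1)+1 = 2r-1 points colored C = ⊎ C_i with each |C_i| ≤ r-1. Then C can be partitioned into r colorful sets F_1,...,F_r (each |C_i ∩ F_j| ≤ 1) whose convex hulls have a common point. -/
/-- Colored Tverberg in dimension 1 for a prime `r`: a set `C ⊂ ℝ` of `2r-1` points,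
colored (by `col`) with all color classes of size at most `r-1`, can be partitioned into
`r` colorful sets whose convex hulls have a common point. -/
theorem colored_tverberg_dim_one (r : ℕ) (hr : r.Prime)
    (C : Finset ℝ) (hC : C.card = 2 * r - 1)
    (col : ℝ → ℕ)
    (hcol : ∀ i, (C.filter (fun x => col x = i)).card ≤ r - 1) :
    ∃ F : Fin r → Finset ℝ,
      (∀ j k, j ≠ k → Disjoint (F j) (F k)) ∧
      (Finset.univ.biUnion F = C) ∧
      (∀ i j, ((F j).filter (fun x => col x = i)).card ≤ 1) ∧
      ∃ p : ℝ, ∀ j, p ∈ convexHull ℝ ((F j : Set ℝ)) := by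
  classical
  obtain ⟨n, rfl⟩ : ∃ n, r = n + 1 := ⟨r - 1, by have := hr.two_le; omega⟩
  have hcol' : ∀ i, (C.filter (fun x => col x = i)).card ≤ n := by
    intro i; have := hcol i; omega
  have hCcard : C.card = 2 * n + 1 := by omega
  -- the median point m
  let e := C.orderIsoOfFin hCcard
  set m : ℝ := (e ⟨n, by omega⟩ : ℝ) with hm
  have hmC : m ∈ C := (e ⟨n, by omega⟩).2
  have hS : (C.filter (fun x => x < m)).card = n := by
    rw [← Finset.card_range n]
    refine Finset.card_bij'
      (fun x hx => ((e.symm ⟨x, (Finset.mem_filter.mp hx).1⟩ : Fin (2*n+1)) : ℕ))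
      (fun k hk => (e ⟨k, lt_of_lt_of_le (Finset.mem_range.mp hk) (by omega)⟩ : ℝ))
      ?_ ?_ ?_ ?_
    · intro x hx
      have hxm := (Finset.mem_filter.mp hx).2
      have h1 : e.symm ⟨x, (Finset.mem_filter.mp hx).1⟩ < ⟨n, by omega⟩ := by
        rw [← e.lt_iff_lt, e.apply_symm_apply]
        exact Subtype.coe_lt_coe.mp hxm
      simpa [Finset.mem_range, Fin.lt_def] using h1
    · intro k hk
      have hkn := Finset.mem_range.mp hk
      refine Finset.mem_filter.mpr ⟨(e _).2, ?_⟩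
      have h2 : (⟨k, lt_of_lt_of_le (Finset.mem_range.mp hk) (by omega)⟩ : Fin (2*n+1))
          < ⟨n, by omega⟩ := by
        simp only [Fin.lt_def]
        omega
      exact Subtype.coe_lt_coe.mpr ((e.lt_iff_lt).mpr h2)
    · intro x hx
      simp
    · intro k hk
      simp
  have hLcard : (C.filter (fun x => m < x)).card = n := by
    have h1 : (C.filter (fun x => x < m)).card + (C.filter (fun x => ¬ x < m)).card = C.card :=
      Finset.card_filter_add_card_filter_not _
    have h2 : C.filter (fun x => ¬ x < m) = insert m (C.filter (fun x => m < x)) := by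
      ext x
      simp only [Finset.mem_filter, Finset.mem_insert, not_lt]
      constructor
      · rintro ⟨hxC, hmx⟩
        rcases eq_or_lt_of_le hmx with h | h
        · exact Or.inl h.symm
        · exact Or.inr ⟨hxC, h⟩
      · rintro (rfl | ⟨hxC, h⟩)
        · exact ⟨hmC, le_refl _⟩
        · exact ⟨hxC, h.le⟩
    have h3 : m ∉ C.filter (fun x => m < x) := by simp
    rw [h2, Finset.card_insert_of_notMem h3] at h1
    omega
  set S := C.filter (fun x => x < m) with hSdef
  set L := C.filter (fun x => m < x) with hLdef
  -- counting per colors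
  have hcount : ∀ c, (S.filter (fun x => col x = c)).card
      + (L.filter (fun x => col x = c)).card ≤ n := by
    intro c
    have hdisj : Disjoint (S.filter (fun x => col x = c)) (L.filter (fun x => col x = c)) := by
      rw [Finset.disjoint_left]
      intro x hx hx'
      have h1 := (Finset.mem_filter.mp (Finset.mem_filter.mp hx).1).2
      have h2 := (Finset.mem_filter.mp (Finset.mem_filter.mp hx').1).2
      exact absurd (h1.trans h2) (lt_irrefl x)
    have hsub : S.filter (fun x => col x = c) ∪ L.filter (fun x => col x = c)
        ⊆ C.filter (fun x => col x = c) := by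
      intro x hx
      rcases Finset.mem_union.mp hx with h | h
      · exact Finset.mem_filter.mpr
          ⟨(Finset.mem_filter.mp (Finset.mem_filter.mp h).1).1, (Finset.mem_filter.mp h).2⟩
      · exact Finset.mem_filter.mpr
          ⟨(Finset.mem_filter.mp (Finset.mem_filter.mp h).1).1, (Finset.mem_filter.mp h).2⟩
    calc (S.filter (fun x => col x = c)).card + (L.filter (fun x => col x = c)).card
        = (S.filter (fun x => col x = c) ∪ L.filter (fun x => col x = c)).card :=
          (Finset.card_union_of_disjoint hdisj).symm
      _ ≤ (C.filter (fun x => col x = c)).card := Finset.card_le_card hsub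
      _ ≤ n := hcol' c
  have hSfin : Fintype.card ↥S = n := by rw [Fintype.card_coe]; exact hS
  -- Hall's marriage theorem: match S with L avoiding equal colors
  have hall : ∀ A : Finset ↥S,
      A.card ≤ (A.biUnion (fun a : ↥S => L.filter (fun x => col x ≠ col (a : ℝ)))).card := by
    intro A
    by_cases hA : ∃ a ∈ A, ∃ b ∈ A, col (a : ℝ) ≠ col (b : ℝ)
    · obtain ⟨a, ha, b, hb, hab⟩ := hA
      have hLsub : L ⊆ A.biUnion (fun a : ↥S => L.filter (fun x => col x ≠ col (a : ℝ))) := by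
        intro l hl
        rcases ne_or_eq (col l) (col (a : ℝ)) with h | h
        · exact Finset.mem_biUnion.mpr ⟨a, ha, Finset.mem_filter.mpr ⟨hl, h⟩⟩
        · exact Finset.mem_biUnion.mpr ⟨b, hb, Finset.mem_filter.mpr ⟨hl, by rw [h]; exact hab⟩⟩
      calc A.card ≤ Fintype.card ↥S := Finset.card_le_univ A
        _ = n := hSfin
        _ = L.card := hLcard.symm
        _ ≤ _ := Finset.card_le_card hLsub
    · push_neg at hA
      rcases A.eq_empty_or_nonempty with rfl | ⟨a₀, ha₀⟩
      · simp
      · set c := col (a₀ : ℝ) with hc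
        clear_value c
        have hAsub : A.image Subtype.val ⊆ S.filter (fun x => col x = c) := by
          intro x hx
          obtain ⟨a, ha, rfl⟩ := Finset.mem_image.mp hx
          exact Finset.mem_filter.mpr ⟨a.2, (hA a ha a₀ ha₀).trans hc.symm⟩
        have hAcard : A.card ≤ (S.filter (fun x => col x = c)).card := by
          rw [← Finset.card_image_of_injective A Subtype.coe_injective]
          exact Finset.card_le_card hAsub
        have hsub2 : L.filter (fun x => col x ≠ c)
            ⊆ A.biUnion (fun a : ↥S => L.filter (fun x => col x ≠ col (a : ℝ))) := by
          intro l hl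
          exact Finset.mem_biUnion.mpr ⟨a₀, ha₀, by rw [← hc]; exact hl⟩
        have hfc : (L.filter (fun x => col x ≠ c)).card
            = n - (L.filter (fun x => col x = c)).card := by
          have h6 := Finset.card_filter_add_card_filter_not
            (s := L) (p := fun x => col x = c)
          simp only [ne_eq]
          omega
        have hcc := hcount c
        have hmain : A.card ≤ (L.filter (fun x => col x ≠ c)).card := by omega
        exact hmain.trans (Finset.card_le_card hsub2)
  obtain ⟨f, hfinj, hft⟩ := (Finset.all_card_le_biUnion_card_iff_exists_injective
      (fun a : ↥S => L.filter (fun x => col x ≠ col (a : ℝ)))).mp hall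
  have hfL : ∀ a : ↥S, f a ∈ L := fun a => (Finset.mem_filter.mp (hft a)).1
  have hfcol : ∀ a : ↥S, col (f a) ≠ col (a : ℝ) := fun a => (Finset.mem_filter.mp (hft a)).2
  have himg : Finset.image f Finset.univ = L := by
    apply Finset.eq_of_subset_of_card_le
    · intro x hx
      obtain ⟨a, _, rfl⟩ := Finset.mem_image.mp hx
      exact hfL a
    · rw [Finset.card_image_of_injective _ hfinj, Finset.card_univ, hSfin, hLcard]
  -- helper facts
  have hSlt : ∀ a : ↥S, (a : ℝ) < m := fun a => (Finset.mem_filter.mp a.2).2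
  have hLgt : ∀ x ∈ L, m < x := fun x hx => (Finset.mem_filter.mp hx).2
  have hSC : ∀ a : ↥S, (a : ℝ) ∈ C := fun a => (Finset.mem_filter.mp a.2).1
  have hLC : ∀ x ∈ L, x ∈ C := fun x hx => (Finset.mem_filter.mp hx).1
  have hflt : ∀ a : ↥S, (a : ℝ) < f a := fun a => lt_trans (hSlt a) (hLgt _ (hfL a))
  have hfne : ∀ a b : ↥S, (a : ℝ) ≠ f b := by
    intro a b h
    have h1 := hSlt a
    have h2 := hLgt _ (hfL b)
    rw [h] at h1
    exact absurd (h1.trans h2) (lt_irrefl _)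
  have hmne : ∀ a : ↥S, m ≠ (a : ℝ) := fun a h => absurd (h ▸ hSlt a) (lt_irrefl _)
  have hmnef : ∀ a : ↥S, m ≠ f a := fun a h => absurd (h ▸ hLgt _ (hfL a)) (lt_irrefl _)
  let g : Fin n ≃ ↥S := (Fintype.equivFinOfCardEq hSfin).symm
  refine ⟨fun j => if h : (j : ℕ) < n then {(g ⟨j, h⟩ : ℝ), f (g ⟨j, h⟩)} else {m},
    ?_, ?_, ?_, ?_⟩
  · -- pairwise disjoint
    intro j k hjk
    dsimp only
    have hvne : (j : ℕ) ≠ (k : ℕ) := fun h => hjk (Fin.ext h)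
    by_cases hj : (j : ℕ) < n <;> by_cases hk : (k : ℕ) < n
    · rw [dif_pos hj, dif_pos hk]
      have hgg : g ⟨j, hj⟩ ≠ g ⟨k, hk⟩ := by
        intro h
        have h2 : (⟨(j : ℕ), hj⟩ : Fin n) = ⟨(k : ℕ), hk⟩ := g.injective h
        exact hvne (by simpa using h2)
      rw [Finset.disjoint_left]
      intro x hx hx'
      simp only [Finset.mem_insert, Finset.mem_singleton] at hx hx'
      rcases hx with rfl | rfl <;> rcases hx' with h | h
      · exact hgg (Subtype.coe_injective h)
      · exact hfne _ _ h
      · exact hfne _ _ h.symm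
      · exact hgg (hfinj h)
    · rw [dif_pos hj, dif_neg hk]
      rw [Finset.disjoint_right]
      intro x hx hx'
      simp only [Finset.mem_singleton] at hx
      subst hx
      simp only [Finset.mem_insert, Finset.mem_singleton] at hx'
      rcases hx' with h | h
      · exact hmne _ h
      · exact hmnef _ h
    · rw [dif_neg hj, dif_pos hk]
      rw [Finset.disjoint_left]
      intro x hx hx'
      simp only [Finset.mem_singleton] at hx
      subst hx
      simp only [Finset.mem_insert, Finset.mem_singleton] at hx'
      rcases hx' with h | h
      · exact hmne _ h
      · exact hmnef _ h
    · exfalso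
      have := j.2
      have := k.2
      omega
  · -- union is C
    ext x
    simp only [Finset.mem_biUnion, Finset.mem_univ, true_and]
    constructor
    · rintro ⟨j, hj⟩
      by_cases h : (j : ℕ) < n
      · rw [dif_pos h] at hj
        simp only [Finset.mem_insert, Finset.mem_singleton] at hj
        rcases hj with rfl | rfl
        · exact hSC _
        · exact hLC _ (hfL _)
      · rw [dif_neg h] at hj
        simp only [Finset.mem_singleton] at hj
        subst hj
        exact hmC
    · intro hxC
      rcases lt_trichotomy x m with h | rfl | h
      · have hxS : x ∈ S := Finset.mem_filter.mpr ⟨hxC, h⟩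
        set a : ↥S := ⟨x, hxS⟩ with ha
        refine ⟨⟨(g.symm a : Fin n), by omega⟩, ?_⟩
        have hlt : ((⟨(g.symm a : Fin n), by omega⟩ : Fin (n+1)) : ℕ) < n := (g.symm a).2
        rw [dif_pos hlt]
        have : (⟨((⟨(g.symm a : Fin n), by omega⟩ : Fin (n+1)) : ℕ), hlt⟩ : Fin n) = g.symm a :=
          Fin.ext rfl
        rw [this, g.apply_symm_apply]
        exact Finset.mem_insert_self _ _
      · refine ⟨⟨n, by omega⟩, ?_⟩
        rw [dif_neg (by simp)]
        exact Finset.mem_singleton_self _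
      · have hxL : x ∈ L := Finset.mem_filter.mpr ⟨hxC, h⟩
        rw [← himg] at hxL
        obtain ⟨a, _, rfl⟩ := Finset.mem_image.mp hxL
        refine ⟨⟨(g.symm a : Fin n), by omega⟩, ?_⟩
        have hlt : ((⟨(g.symm a : Fin n), by omega⟩ : Fin (n+1)) : ℕ) < n := (g.symm a).2
        rw [dif_pos hlt]
        have : (⟨((⟨(g.symm a : Fin n), by omega⟩ : Fin (n+1)) : ℕ), hlt⟩ : Fin n) = g.symm a :=
          Fin.ext rfl
        rw [this, g.apply_symm_apply]
        exact Finset.mem_insert_of_mem (Finset.mem_singleton_self _)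
  · -- colorful
    intro i j
    dsimp only
    by_cases h : (j : ℕ) < n
    · rw [dif_pos h]
      apply Finset.card_le_one.mpr
      intro x hx y hy
      simp only [Finset.mem_filter, Finset.mem_insert, Finset.mem_singleton] at hx hy
      obtain ⟨hx1, hx2⟩ := hx
      obtain ⟨hy1, hy2⟩ := hy
      rcases hx1 with rfl | rfl <;> rcases hy1 with rfl | rfl
      · rfl
      · exact absurd (hy2.trans hx2.symm) (hfcol _)
      · exact absurd (hx2.trans hy2.symm) (hfcol _)
      · rfl
    · rw [dif_neg h]
      exact (Finset.card_le_card (Finset.filter_subset _ _)).trans (by simp)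
  · -- common point
    refine ⟨m, fun j => ?_⟩
    dsimp only
    by_cases h : (j : ℕ) < n
    · rw [dif_pos h]
      set a := g ⟨j, h⟩ with hadef
      have h1 : (a : ℝ) ∈ convexHull ℝ (({(a : ℝ), f a} : Finset ℝ) : Set ℝ) :=
        subset_convexHull ℝ _ (by simp)
      have h2 : f a ∈ convexHull ℝ (({(a : ℝ), f a} : Finset ℝ) : Set ℝ) :=
        subset_convexHull ℝ _ (by simp)
      have hseg := (convex_convexHull ℝ _).segment_subset h1 h2
      apply hseg
      rw [segment_eq_Icc (hflt a).le]
      exact ⟨(hSlt a).le, (hLgt _ (hfL a)).le⟩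
    · rw [dif_neg h]
      exact subset_convexHull ℝ _ (by simp)
end

section
/- Reduction Lemma (affine case, k = 0): if the colored Tverberg statement holds in ℝ^d for parameter r, then it also holds in ℝ^{d-1} for the same r. Concretely: suppose for every set of (r-1)(d+1)+1 points in ℝ^d colored with classes of size ≤ r-1 there is a colorful Tverberg r-partition; then the same holds for every set of (r-1)d+1 points in ℝ^{d-1} colored with classes of size ≤ r-1. -/
/-- The affine colored Tverberg statement in `ℝ^d` for parameter `r`: every set of
`(r-1)(d+1)+1` points colored with classes of size `≤ r-1` admits a colorful Tverberg
`r`-partition. -/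
def ColoredTverberg (d r : ℕ) : Prop :=
  letI : DecidableEq (EuclideanSpace ℝ (Fin d)) := Classical.decEq _
  ∀ (C : Finset (EuclideanSpace ℝ (Fin d))) (col : EuclideanSpace ℝ (Fin d) → ℕ),
    C.card = (r - 1) * (d + 1) + 1 →
    (∀ i, (C.filter (fun x => col x = i)).card ≤ r - 1) →
    ∃ F : Fin r → Finset (EuclideanSpace ℝ (Fin d)),
      (∀ j k, j ≠ k → Disjoint (F j) (F k)) ∧
      (Finset.univ.biUnion F = C) ∧
      (∀ i j, ((F j).filter (fun x => col x = i)).card ≤ 1) ∧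
      (⋂ j, convexHull ℝ ((F j : Set (EuclideanSpace ℝ (Fin d))))).Nonempty

section Aux

open Finset

variable (e : ℕ)

/-- Projection dropping the last coordinate, as a linear map. -/
noncomputable def tvP : EuclideanSpace ℝ (Fin (e+1)) →ₗ[ℝ] EuclideanSpace ℝ (Fin e) :=
  (WithLp.linearEquiv 2 ℝ (Fin e → ℝ)).symm.toLinearMap ∘ₗ
    (LinearMap.funLeft ℝ ℝ Fin.castSucc) ∘ₗ (WithLp.linearEquiv 2 ℝ (Fin (e+1) → ℝ)).toLinearMap

/-- The last coordinate, as a linear map. -/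
noncomputable def tvL : EuclideanSpace ℝ (Fin (e+1)) →ₗ[ℝ] ℝ :=
  EuclideanSpace.projₗ (Fin.last e)

/-- Embedding `ℝ^e → ℝ^{e+1}` appending a zero coordinate. -/
def tvI (x : EuclideanSpace ℝ (Fin e)) : EuclideanSpace ℝ (Fin (e+1)) :=
  WithLp.toLp 2 (Fin.snoc x 0 : Fin (e+1) → ℝ)

lemma tvP_tvI (x : EuclideanSpace ℝ (Fin e)) : tvP e (tvI e x) = x := by
  ext i
  show (Fin.snoc x 0 : Fin (e+1) → ℝ) i.castSucc = x i
  simp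

lemma tvL_tvI (x : EuclideanSpace ℝ (Fin e)) : tvL e (tvI e x) = 0 := by
  show (Fin.snoc x 0 : Fin (e+1) → ℝ) (Fin.last e) = 0
  simp

lemma tvI_injective : Function.Injective (tvI e) := by
  intro a b hab
  have := congrArg (tvP e) hab
  rwa [tvP_tvI, tvP_tvI] at this

/-- The extra points placed off the hyperplane. -/
def tvQ (t : ℕ) : EuclideanSpace ℝ (Fin (e+1)) :=
  WithLp.toLp 2 (Fin.snoc (0 : Fin e → ℝ) ((t : ℝ) + 1) : Fin (e+1) → ℝ)

lemma tvL_tvQ (t : ℕ) : tvL e (tvQ e t) = (t : ℝ) + 1 := by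
  show (Fin.snoc (0 : Fin e → ℝ) ((t : ℝ) + 1) : Fin (e+1) → ℝ) (Fin.last e) = _
  simp

lemma tvQ_injective : Function.Injective (tvQ e) := by
  intro a b hab
  have := congrArg (tvL e) hab
  rw [tvL_tvQ, tvL_tvQ] at this
  exact_mod_cast add_right_cancel this

end Aux

/-- Reduction Lemma (affine case, `k = 0`): if the colored Tverberg statement holds in `ℝ^d`
for parameter `r`, then it also holds in `ℝ^{d-1}`. -/
theorem colored_tverberg_reduction (r d : ℕ) (hr : 2 ≤ r) (hd : 1 ≤ d)
    (h : ColoredTverberg d r) : ColoredTverberg (d - 1) r := by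
  classical
  obtain ⟨e, rfl⟩ : ∃ e, d = e + 1 := ⟨d - 1, (Nat.succ_pred_eq_of_pos hd).symm⟩
  simp only [Nat.add_sub_cancel]
  intro C col hcard hcol
  set ι := tvI e with hι
  set π := tvP e with hπ
  set L := tvL e with hL
  set A : Finset (EuclideanSpace ℝ (Fin (e+1))) := C.image ι with hA
  set Q : Finset (EuclideanSpace ℝ (Fin (e+1))) := (Finset.range (r-1)).image (tvQ e) with hQ
  set C' : Finset (EuclideanSpace ℝ (Fin (e+1))) := A ∪ Q with hC'
  set N : ℕ := C.sup col with hN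
  set col' : EuclideanSpace ℝ (Fin (e+1)) → ℕ :=
    fun y => if L y = 0 then col (π y) else N + 1 + ⌈L y⌉₊ with hcol'
  -- basic facts
  have hLI : ∀ x, L (ι x) = 0 := fun x => tvL_tvI e x
  have hPI : ∀ x, π (ι x) = x := fun x => tvP_tvI e x
  have hLQt : ∀ t, L (tvQ e t) = (t : ℝ) + 1 := fun t => tvL_tvQ e t
  have hLA : ∀ y ∈ A, L y = 0 := by
    intro y hy
    rw [hA] at hy
    obtain ⟨x, _, rfl⟩ := Finset.mem_image.1 hy
    exact hLI x
  have hLQ : ∀ y ∈ Q, ∃ t < r - 1, y = tvQ e t := by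
    intro y hy
    rw [hQ] at hy
    obtain ⟨t, ht, rfl⟩ := Finset.mem_image.1 hy
    exact ⟨t, Finset.mem_range.1 ht, rfl⟩
  have hcol'I : ∀ x, col' (ι x) = col x := by
    intro x
    simp only [hcol']
    simp [hLI, hPI]
  have hcol'Q : ∀ t, col' (tvQ e t) = N + 1 + (t + 1) := by
    intro t
    simp only [hcol']
    have h2 : ((t : ℝ) + 1) ≠ 0 := by positivity
    rw [hLQt t, if_neg h2]
    congr 1
    rw [show ((t : ℝ) + 1) = ((t + 1 : ℕ) : ℝ) by push_cast; ring, Nat.ceil_natCast]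
  have hdisjAQ : Disjoint A Q := by
    rw [Finset.disjoint_left]
    intro y hyA hyQ
    obtain ⟨t, _, rfl⟩ := hLQ y hyQ
    have h1 := hLA _ hyA
    rw [hLQt t] at h1
    have h2 : (0:ℝ) < (t : ℝ) + 1 := by positivity
    linarith
  -- cardinality of C'
  have hcardA : A.card = C.card := Finset.card_image_of_injective _ (tvI_injective e)
  have hcardQ : Q.card = r - 1 := by
    rw [hQ, Finset.card_image_of_injective _ (tvQ_injective e), Finset.card_range]
  have hcardC' : C'.card = (r - 1) * ((e + 1) + 1) + 1 := by
    rw [hC', Finset.card_union_of_disjoint hdisjAQ, hcardA, hcardQ, hcard]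
    generalize r - 1 = s
    ring
  -- color classes of C'
  have hcol'bound : ∀ i, (C'.filter (fun y => col' y = i)).card ≤ r - 1 := by
    intro i
    by_cases hiN : i ≤ N
    · have : C'.filter (fun y => col' y = i) = (C.filter (fun x => col x = i)).image ι := by
        ext y
        simp only [Finset.mem_filter, Finset.mem_image, hC', Finset.mem_union]
        constructor
        · rintro ⟨hy | hy, hcy⟩
          · obtain ⟨x, hx, rfl⟩ := Finset.mem_image.1 hy
            exact ⟨x, ⟨hx, by rwa [hcol'I] at hcy⟩, rfl⟩
          · obtain ⟨t, _, rfl⟩ := hLQ y hy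
            rw [hcol'Q] at hcy
            omega
        · rintro ⟨x, ⟨hx, hcx⟩, rfl⟩
          exact ⟨Or.inl (Finset.mem_image_of_mem _ hx), by rw [hcol'I, hcx]⟩
      rw [this, Finset.card_image_of_injective _ (tvI_injective e)]
      exact hcol i
    · push_neg at hiN
      have hsub : C'.filter (fun y => col' y = i) ⊆ Q.filter (fun y => col' y = i) := by
        intro y hy
        obtain ⟨hy1, hy2⟩ := Finset.mem_filter.1 hy
        rw [Finset.mem_filter]
        rcases Finset.mem_union.1 hy1 with hy1 | hy1
        · exfalso
          obtain ⟨x, hx, rfl⟩ := Finset.mem_image.1 hy1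
          rw [hcol'I] at hy2
          have : col x ≤ N := Finset.le_sup (f := col) hx
          omega
        · exact ⟨hy1, hy2⟩
      have hone : (Q.filter (fun y => col' y = i)).card ≤ 1 := by
        rw [Finset.card_le_one]
        intro a ha b hb
        obtain ⟨haQ, hca⟩ := Finset.mem_filter.1 ha
        obtain ⟨hbQ, hcb⟩ := Finset.mem_filter.1 hb
        obtain ⟨t, _, rfl⟩ := hLQ a haQ
        obtain ⟨s, _, rfl⟩ := hLQ b hbQ
        rw [hcol'Q] at hca hcb
        have : t = s := by omega
        rw [this]
      calc (C'.filter (fun y => col' y = i)).card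
          ≤ (Q.filter (fun y => col' y = i)).card := Finset.card_le_card hsub
        _ ≤ 1 := hone
        _ ≤ r - 1 := by omega
  -- apply the hypothesis in dimension e+1
  obtain ⟨F', hdisj', hunion', hcolF', z, hz⟩ := h C' col' hcardC' hcol'bound
  rw [Set.mem_iInter] at hz
  -- a part avoiding all extra points, forcing L z = 0
  have hj0 : ∃ j0 : Fin r, ∀ y ∈ F' j0, y ∉ Q := by
    by_contra hcon
    push_neg at hcon
    choose f hf1 hf2 using hcon
    have hinj : Set.InjOn f ↑(Finset.univ : Finset (Fin r)) := by
      intro j _ k _ hjk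
      by_contra hne
      exact Finset.disjoint_left.1 (hdisj' j k hne) (hf1 j) (hjk ▸ hf1 k)
    have := Finset.card_le_card_of_injOn f (fun j _ => hf2 j) hinj
    rw [Finset.card_univ, Fintype.card_fin, hcardQ] at this
    omega
  obtain ⟨j0, hj0⟩ := hj0
  have hF'sub : ∀ j, (F' j : Set (EuclideanSpace ℝ (Fin (e+1)))) ⊆ (C' : Set (EuclideanSpace ℝ (Fin (e+1)))) := by
    intro j y hy
    rw [← hunion']
    exact Finset.mem_coe.2 (by letI : DecidableEq (EuclideanSpace ℝ (Fin (e+1))) := Classical.decEq _; exact Finset.mem_biUnion.2 ⟨j, Finset.mem_univ j, hy⟩)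
  have hLz : L z = 0 := by
    have hsub : (F' j0 : Set _) ⊆ {y | L y = 0} := by
      intro y hy
      have hyC' : y ∈ C' := hF'sub j0 hy
      rcases Finset.mem_union.1 hyC' with hyA | hyQ
      · exact hLA y hyA
      · exact absurd hyQ (hj0 y hy)
    have hconv : Convex ℝ {y : EuclideanSpace ℝ (Fin (e+1)) | L y = 0} := by
      intro a ha b hb s t hs ht hst
      simp only [Set.mem_setOf_eq] at *
      simp [map_add, map_smul, ha, hb]
    have := convexHull_min hsub hconv (hz j0)
    exact this
  -- the parts restricted to the hyperplane
  set G : Fin r → Finset (EuclideanSpace ℝ (Fin (e+1))) := fun j => F' j ∩ A with hG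
  set F : Fin r → Finset (EuclideanSpace ℝ (Fin e)) := fun j => (G j).image (fun y => π y) with hF
  -- key : z lies in the convex hull of each G j
  have hzG : ∀ j, z ∈ convexHull ℝ ((G j : Set (EuclideanSpace ℝ (Fin (e+1))))) := by
    intro j
    have hzj := hz j
    rw [Finset.convexHull_eq] at hzj
    obtain ⟨w, hw0, hw1, hwz⟩ := hzj
    rw [Finset.centerMass_eq_of_sum_1 _ _ hw1] at hwz
    simp only [id] at hwz
    -- weights vanish on the extra points
    have hLnonneg : ∀ y ∈ F' j, 0 ≤ L y := by
      intro y hy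
      rcases Finset.mem_union.1 (hF'sub j hy) with hyA | hyQ
      · rw [hLA y hyA]
      · obtain ⟨t, _, rfl⟩ := hLQ y hyQ
        rw [hLQt t]; positivity
    have hzero : ∀ y ∈ F' j, y ∉ A → w y = 0 := by
      have hsum0 : ∑ y ∈ F' j, w y * L y = 0 := by
        have := congrArg L hwz
        rw [map_sum] at this
        simp only [map_smul, smul_eq_mul] at this
        exact this.trans hLz
      have hterm : ∀ y ∈ F' j, w y * L y = 0 :=
        (Finset.sum_eq_zero_iff_of_nonneg
          (fun y hy => mul_nonneg (hw0 y hy) (hLnonneg y hy))).1 hsum0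
      intro y hy hyA
      rcases Finset.mem_union.1 (hF'sub j hy) with h1 | hyQ
      · exact absurd h1 hyA
      · obtain ⟨t, _, rfl⟩ := hLQ y hyQ
        have ht := hterm _ hy
        rw [hLQt t] at ht
        rcases mul_eq_zero.1 ht with h1 | h1
        · exact h1
        · exfalso; have : (0:ℝ) < (t:ℝ) + 1 := by positivity
          linarith
    have hGsub : G j ⊆ F' j := Finset.inter_subset_left
    have hvanish : ∀ y ∈ F' j, y ∉ G j → w y = 0 := by
      intro y hy hyG
      refine hzero y hy fun hyA => hyG ?_
      exact Finset.mem_inter.2 ⟨hy, hyA⟩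
    have hsumG : ∑ y ∈ G j, w y = 1 := by
      rw [← hw1]
      exact Finset.sum_subset hGsub (fun y hy hyG => hvanish y hy hyG)
    have hzsum : ∑ y ∈ G j, w y • y = z := by
      rw [← hwz]
      refine Finset.sum_subset hGsub (fun y hy hyG => ?_)
      rw [hvanish y hy hyG, zero_smul]
    have := Finset.centerMass_mem_convexHull (G j)
      (fun y hy => hw0 y (hGsub hy)) (by rw [hsumG]; norm_num)
      (fun y hy => Finset.mem_coe.2 hy)
    rwa [Finset.centerMass_eq_of_sum_1 _ _ hsumG, hzsum] at this
  -- the point π z lies in all the convex hulls of the F j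
  have hπz : ∀ j, π z ∈ convexHull ℝ ((F j : Set (EuclideanSpace ℝ (Fin e)))) := by
    intro j
    have : (F j : Set (EuclideanSpace ℝ (Fin e))) = π '' (G j : Set _) := by
      rw [hF]; simp [Finset.coe_image]
    rw [this, ← LinearMap.image_convexHull]
    exact ⟨z, hzG j, rfl⟩
  -- members of G j come from C
  have hGmem : ∀ j y, y ∈ G j → ∃ x ∈ C, ι x = y ∧ y ∈ F' j := by
    intro j y hy
    obtain ⟨hy1, hy2⟩ := Finset.mem_inter.1 hy
    obtain ⟨x, hx, rfl⟩ := Finset.mem_image.1 hy2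
    exact ⟨x, hx, rfl, hy1⟩
  have hFmem : ∀ j x, x ∈ F j → x ∈ C ∧ ι x ∈ F' j := by
    intro j x hx
    rw [hF] at hx
    obtain ⟨y, hy, rfl⟩ := Finset.mem_image.1 hx
    obtain ⟨c, hc, rfl, hyF⟩ := hGmem j y hy
    rw [hPI]
    exact ⟨hc, hyF⟩
  refine ⟨F, ?_, ?_, ?_, ⟨π z, Set.mem_iInter.2 hπz⟩⟩
  · -- disjointness
    intro j k hjk
    rw [Finset.disjoint_left]
    intro a haj hak
    obtain ⟨_, haj'⟩ := hFmem j a haj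
    obtain ⟨_, hak'⟩ := hFmem k a hak
    exact Finset.disjoint_left.1 (hdisj' j k hjk) haj' hak'
  · -- union
    ext x
    simp only [Finset.mem_biUnion, Finset.mem_univ, true_and]
    constructor
    · rintro ⟨j, hj⟩
      exact (hFmem j x hj).1
    · intro hx
      have hιx : ι x ∈ C' := Finset.mem_union.2 (Or.inl (Finset.mem_image_of_mem _ hx))
      rw [← hunion'] at hιx
      obtain ⟨j, _, hj⟩ := (by letI : DecidableEq (EuclideanSpace ℝ (Fin (e+1))) := Classical.decEq _; exact Finset.mem_biUnion.1 hιx : ∃ j ∈ (Finset.univ : Finset (Fin r)), ι x ∈ F' j)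
      refine ⟨j, ?_⟩
      rw [hF]
      refine Finset.mem_image.2 ⟨ι x, Finset.mem_inter.2 ⟨hj, Finset.mem_image_of_mem _ hx⟩, ?_⟩
      exact hPI x
  · -- color condition
    intro i j
    have hsub : ∀ x ∈ (F j).filter (fun x => col x = i),
        ι x ∈ (F' j).filter (fun y => col' y = i) := by
      intro x hx
      obtain ⟨hx1, hx2⟩ := Finset.mem_filter.1 hx
      obtain ⟨_, hιx⟩ := hFmem j x hx1
      exact Finset.mem_filter.2 ⟨hιx, by rw [hcol'I, hx2]⟩
    calc ((F j).filter (fun x => col x = i)).card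
        ≤ ((F' j).filter (fun y => col' y = i)).card :=
          Finset.card_le_card_of_injOn ι hsub (fun a _ b _ hab => tvI_injective e hab)
      _ ≤ 1 := hcolF' i j
end

section
/- Reduction Lemma for the Tverberg–Vrećica setting: if the colored Tverberg–Vrećica conjecture holds for parameters (d, k, r_0, ..., r_k) with k ≥ 1, then it holds for parameters (d-1, k-1, r_0, ..., r_{k-1}). -/
/-- The colored Tverberg–Vrećica statement for parameters `(d, k, r₀, …, r_k)`: for all
colored point sets `C^ℓ ⊂ ℝ^d` of cardinality `(r_ℓ-1)(d-k+1)+1` with color classes of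
size `≤ r_ℓ - 1`, each `C^ℓ` can be partitioned into `r_ℓ` colorful sets such that some
`k`-dimensional affine plane meets all convex hulls of the pieces. -/
def ColoredTV (d k : ℕ) (r : Fin (k + 1) → ℕ) : Prop :=
  letI : DecidableEq (EuclideanSpace ℝ (Fin d)) := Classical.decEq _
  ∀ (C : ∀ _ : Fin (k + 1), Finset (EuclideanSpace ℝ (Fin d)))
    (col : Fin (k + 1) → EuclideanSpace ℝ (Fin d) → ℕ),
    (∀ ℓ, (C ℓ).card = (r ℓ - 1) * (d - k + 1) + 1) →
    (∀ ℓ i, ((C ℓ).filter (fun x => col ℓ x = i)).card ≤ r ℓ - 1) →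
    ∃ (F : ∀ ℓ : Fin (k + 1), Fin (r ℓ) → Finset (EuclideanSpace ℝ (Fin d)))
      (P : AffineSubspace ℝ (EuclideanSpace ℝ (Fin d))),
      (P : Set (EuclideanSpace ℝ (Fin d))).Nonempty ∧
      Module.finrank ℝ P.direction = k ∧
      ∀ ℓ, (∀ j j', j ≠ j' → Disjoint (F ℓ j) (F ℓ j')) ∧
        (Finset.univ.biUnion (F ℓ) = C ℓ) ∧
        (∀ i j, ((F ℓ j).filter (fun x => col ℓ x = i)).card ≤ 1) ∧
        (∀ j, ((P : Set (EuclideanSpace ℝ (Fin d))) ∩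
          convexHull ℝ ((F ℓ j : Set (EuclideanSpace ℝ (Fin d))))).Nonempty)

noncomputable def embL (d : ℕ) : EuclideanSpace ℝ (Fin d) →ₗ[ℝ] EuclideanSpace ℝ (Fin (d+1)) where
  toFun x := WithLp.toLp 2 (fun i => if h : (i : ℕ) < d then x ⟨i, h⟩ else 0)
  map_add' x y := by ext i; by_cases h : (i:ℕ) < d <;> simp [h]
  map_smul' c x := by ext i; by_cases h : (i:ℕ) < d <;> simp [h]

noncomputable def resL (d : ℕ) : EuclideanSpace ℝ (Fin (d+1)) →ₗ[ℝ] EuclideanSpace ℝ (Fin d) where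
  toFun x := WithLp.toLp 2 (fun i => x (Fin.castSucc i))
  map_add' x y := rfl
  map_smul' c x := rfl

noncomputable def lastF (d : ℕ) : EuclideanSpace ℝ (Fin (d+1)) →ₗ[ℝ] ℝ where
  toFun x := x (Fin.last d)
  map_add' x y := rfl
  map_smul' c x := rfl

lemma resL_embL (d : ℕ) (x : EuclideanSpace ℝ (Fin d)) : resL d (embL d x) = x := by
  ext i
  simp [resL, embL, Fin.castSucc, Fin.castAdd, Fin.castLE, i.isLt]

lemma embL_inj (d : ℕ) : Function.Injective (embL d) := by
  intro x y hxy
  have := congrArg (resL d) hxy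
  rwa [resL_embL, resL_embL] at this

lemma lastF_apply (d : ℕ) (x : EuclideanSpace ℝ (Fin (d+1))) : lastF d x = x (Fin.last d) := rfl

lemma lastF_embL (d : ℕ) (x : EuclideanSpace ℝ (Fin d)) : lastF d (embL d x) = 0 := by
  simp [lastF_apply, embL]

lemma embL_resL (d : ℕ) (x : EuclideanSpace ℝ (Fin (d+1))) (hx : lastF d x = 0) :
    embL d (resL d x) = x := by
  ext i
  by_cases h : (i:ℕ) < d
  · simp only [embL, resL, LinearMap.coe_mk, AddHom.coe_mk, dif_pos h]
    rfl
  · have : i = Fin.last d := Fin.ext (by rw [Fin.val_last]; omega)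
    subst this
    simpa [embL, lastF_apply] using hx.symm

lemma finrank_inf_ker {E : Type*} [AddCommGroup E] [Module ℝ E] [FiniteDimensional ℝ E]
    (V : Submodule ℝ E) (f : E →ₗ[ℝ] ℝ) (v : E) (hv : v ∈ V) (hfv : f v ≠ 0) :
    Module.finrank ℝ ↥(V ⊓ LinearMap.ker f) + 1 = Module.finrank ℝ V := by
  set g := f.domRestrict V with hg
  have hker : LinearMap.ker g = Submodule.comap V.subtype (V ⊓ LinearMap.ker f) := by
    ext x
    simp [hg, LinearMap.mem_ker, LinearMap.domRestrict_apply, x.2]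
  have hrange : LinearMap.range g = ⊤ := by
    rcases (Ideal.eq_bot_or_top (LinearMap.range g)) with hb | ht
    · exfalso
      apply hfv
      have : g ⟨v, hv⟩ ∈ LinearMap.range g := LinearMap.mem_range_self _ _
      rw [hb] at this
      simpa [hg] using this
    · exact ht
  have h1 := LinearMap.finrank_range_add_finrank_ker g
  rw [hrange, hker] at h1
  have h2 : Module.finrank ℝ (Submodule.comap V.subtype (V ⊓ LinearMap.ker f))
      = Module.finrank ℝ ↥(V ⊓ LinearMap.ker f) :=
    (Submodule.comapSubtypeEquivOfLe inf_le_left).finrank_eq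
  rw [h2] at h1
  simpa [add_comm] using h1


/-- Reduction Lemma for the Tverberg–Vrećica setting: if the colored Tverberg–Vrećica
statement holds for `(d, k, r₀, …, r_k)` with `k ≥ 1`, then it holds for
`(d-1, k-1, r₀, …, r_{k-1})`. -/
theorem coloredTV_reduction (d k : ℕ) (hk : 1 ≤ k) (hkd : k ≤ d)
    (r : Fin (k + 1) → ℕ) (hr : ∀ ℓ, 2 ≤ r ℓ)
    (h : ColoredTV d k r) :
    ColoredTV (d - 1) (k - 1) (fun ℓ => r (Fin.castLE (by omega) ℓ)) := by
  obtain ⟨k, rfl⟩ : ∃ k', k = k' + 1 := ⟨k - 1, by omega⟩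
  obtain ⟨d, rfl⟩ : ∃ d', d = d' + 1 := ⟨d - 1, by omega⟩
  intro C col hcard hcol
  classical
  letI : ∀ n, DecidableEq (EuclideanSpace ℝ (Fin n)) := fun _ => Classical.decEq _
  set E := EuclideanSpace ℝ (Fin (d + 1))
  set L : EuclideanSpace ℝ (Fin d) →ₗ[ℝ] E := embL d with hL
  set Rm : E →ₗ[ℝ] EuclideanSpace ℝ (Fin d) := resL d with hRm
  set f : E →ₗ[ℝ] ℝ := lastF d with hf
  -- new point set
  set N := (r (Fin.last (k + 1)) - 1) * ((d + 1) - (k + 1) + 1) + 1 with hN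
  set q : ℕ → E := fun m => WithLp.toLp 2 (fun i => if i = Fin.last d then ((m : ℝ) + 1) else 0) with hq
  have hfq : ∀ m, f (q m) = (m : ℝ) + 1 := by
    intro m; rw [hf, hq]; exact (lastF_apply d _).trans (by simp)
  have hqinj : Function.Injective q := by
    intro m m' hmm
    have := congrArg (f) hmm
    rw [hfq, hfq] at this
    exact_mod_cast (by linarith : (m : ℝ) = m')
  set D : ∀ _ : Fin (k + 2), Finset E := fun ℓ =>
    Fin.lastCases (motive := fun _ => Finset E) ((Finset.range N).image q)
      (fun i => (C i).image L) ℓ with hD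
  set col' : Fin (k + 2) → E → ℕ := fun ℓ =>
    Fin.lastCases (motive := fun _ => E → ℕ) (fun x => (⌊f x⌋).toNat)
      (fun i x => col i (Rm x)) ℓ with hcol'
  have hDlast : D (Fin.last (k + 1)) = (Finset.range N).image q := by
    simp [hD]
  have hDcast : ∀ i : Fin (k + 1), D i.castSucc = (C i).image L := by
    intro i; simp [hD]
  have hcol'last : ∀ x, col' (Fin.last (k + 1)) x = (⌊f x⌋).toNat := by
    intro x; simp [hcol']
  have hcol'cast : ∀ (i : Fin (k + 1)) x, col' i.castSucc x = col i (Rm x) := by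
    intro i x; simp [hcol']
  have hsub : (d + 1) - (k + 1) = d - k := by omega
  -- cardinality hypothesis
  have hcard' : ∀ ℓ, (D ℓ).card = (r ℓ - 1) * ((d + 1) - (k + 1) + 1) + 1 := by
    intro ℓ
    induction ℓ using Fin.lastCases with
    | last =>
      rw [hDlast, Finset.card_image_of_injective _ hqinj, Finset.card_range]
    | cast i =>
      rw [hDcast, Finset.card_image_of_injective _ (embL_inj d), hsub]
      exact hcard i
  -- color hypothesis
  have hcol2 : ∀ ℓ i, ((D ℓ).filter (fun x => col' ℓ x = i)).card ≤ r ℓ - 1 := by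
    intro ℓ i
    induction ℓ using Fin.lastCases with
    | last =>
      have h1 : ((D (Fin.last (k+1))).filter (fun x => col' (Fin.last (k+1)) x = i)).card ≤ 1 := by
        rw [Finset.card_le_one]
        intro a ha b hb
        simp only [hDlast, Finset.mem_filter, Finset.mem_image, Finset.mem_range] at ha hb
        obtain ⟨⟨m, hm, rfl⟩, hca⟩ := ha
        obtain ⟨⟨m', hm', rfl⟩, hcb⟩ := hb
        rw [hcol'last, hfq] at hca hcb
        have hfloor : ∀ n : ℕ, (⌊(n : ℝ) + 1⌋).toNat = n + 1 := by
          intro n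
          rw [show ((n : ℝ) + 1) = ((n + 1 : ℕ) : ℝ) by push_cast; ring, Int.floor_natCast]
          simp
        rw [hfloor] at hca hcb
        have : m = m' := by omega
        subst this; rfl
      have := hr (Fin.last (k + 1))
      omega
    | cast j =>
      have himg : (D j.castSucc).filter (fun x => col' j.castSucc x = i)
          = ((C j).filter (fun x => col j x = i)).image L := by
        rw [hDcast, Finset.filter_image]
        apply congrArg
        apply Finset.filter_congr
        intro x hx
        rw [hcol'cast, hL, hRm, resL_embL]
      rw [himg, Finset.card_image_of_injective _ (embL_inj d)]
      exact hcol j i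
  obtain ⟨F, P, hPne, hPrank, hprop⟩ := h D col' hcard' hcol2
  -- the hyperplane H = {x | f x = 0}
  set H : AffineSubspace ℝ E := AffineSubspace.mk' (0 : E) (LinearMap.ker f) with hH
  have hmemH : ∀ x : E, x ∈ H ↔ f x = 0 := by
    intro x
    rw [hH, AffineSubspace.mem_mk']
    simp [LinearMap.mem_ker]
  have hHconv : Convex ℝ (H : Set E) := (H : AffineSubspace ℝ E).convex
  -- each F ℓ.castSucc j lies in H
  have hFsub : ∀ (ℓ : Fin (k + 1)) (j : Fin (r ℓ.castSucc)),
      (F ℓ.castSucc j : Set E) ⊆ (H : Set E) := by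
    intro ℓ j x hx
    have hsubD : F ℓ.castSucc j ⊆ D ℓ.castSucc := by
      rw [← (hprop ℓ.castSucc).2.1]
      exact Finset.subset_biUnion_of_mem _ (Finset.mem_univ j)
    have := hsubD hx
    rw [hDcast] at this
    obtain ⟨y, _, rfl⟩ := Finset.mem_image.1 this
    rw [SetLike.mem_coe, hmemH]
    exact lastF_embL d y
  have hFconvH : ∀ (ℓ : Fin (k + 1)) (j : Fin (r ℓ.castSucc)),
      convexHull ℝ (F ℓ.castSucc j : Set E) ⊆ (H : Set E) := fun ℓ j =>
    convexHull_min (hFsub ℓ j) hHconv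
  -- get a point of P in H
  have hk1 : 0 < r ((0 : Fin (k+1)).castSucc) := by have := hr ((0 : Fin (k+1)).castSucc); omega
  obtain ⟨z, hzP, hzconv⟩ := (hprop ((0 : Fin (k+1)).castSucc)).2.2.2 ⟨0, hk1⟩
  have hzH : z ∈ H := hFconvH 0 _ hzconv
  -- get a point of P with f ≥ 1
  have hk2 : 0 < r (Fin.last (k + 1)) := by have := hr (Fin.last (k + 1)); omega
  obtain ⟨y, hyP, hyconv⟩ := (hprop (Fin.last (k + 1))).2.2.2 ⟨0, hk2⟩
  have hyf : 1 ≤ f y := by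
    have hsubD : F (Fin.last (k+1)) ⟨0, hk2⟩ ⊆ D (Fin.last (k+1)) := by
      rw [← (hprop (Fin.last (k+1))).2.1]
      exact Finset.subset_biUnion_of_mem _ (Finset.mem_univ _)
    have hsubHS : (F (Fin.last (k+1)) ⟨0, hk2⟩ : Set E) ⊆ {x | 1 ≤ f x} := by
      intro x hx
      have := hsubD hx
      rw [hDlast] at this
      obtain ⟨m, _, rfl⟩ := Finset.mem_image.1 this
      simp only [Set.mem_setOf_eq, hfq]
      have : (0:ℝ) ≤ m := Nat.cast_nonneg m
      linarith
    exact convexHull_min hsubHS (convex_halfSpace_ge (f.isLinear) 1) hyconv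
  -- Q = P ⊓ H
  set Q : AffineSubspace ℝ E := P ⊓ H with hQ
  have hzQ : z ∈ Q := ⟨hzP, hzH⟩
  have hQdir : Q.direction = P.direction ⊓ LinearMap.ker f := by
    rw [hQ, AffineSubspace.direction_inf_of_mem hzP hzH, hH, AffineSubspace.direction_mk']
  have hv : y -ᵥ z ∈ P.direction := AffineSubspace.vsub_mem_direction hyP hzP
  have hfz : f z = 0 := (hmemH z).1 hzH
  have hfv : f (y -ᵥ z) ≠ 0 := by
    have : f (y -ᵥ z) = f y - f z := by
      simp [vsub_eq_sub]
    rw [this, hfz]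
    intro hcon
    rw [sub_zero] at hcon
    linarith
  have hQrank : Module.finrank ℝ Q.direction = k := by
    have := finrank_inf_ker P.direction f (y -ᵥ z) hv hfv
    rw [hPrank] at this
    rw [hQdir]
    exact Nat.add_right_cancel this
  -- the final plane
  set P' : AffineSubspace ℝ (EuclideanSpace ℝ (Fin d)) := Q.map Rm.toAffineMap with hP'
  have hQker : Q.direction ≤ LinearMap.ker f := by rw [hQdir]; exact inf_le_right
  have hmapmap : (Q.direction.map Rm).map L = Q.direction := by
    ext u
    simp only [Submodule.mem_map]
    constructor
    · rintro ⟨w, ⟨w', hw', rfl⟩, rfl⟩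
      rwa [hL, hRm, embL_resL d w' (hQker hw')]
    · intro hu
      exact ⟨Rm u, ⟨u, hu, rfl⟩, by rw [hL, hRm, embL_resL d u (hQker hu)]⟩
  have hP'dir : P'.direction = Q.direction.map Rm := by
    rw [hP', AffineSubspace.map_direction]
    congr 1
  have hP'rank : Module.finrank ℝ P'.direction = k := by
    rw [hP'dir]
    have h1 : Module.finrank ℝ (Q.direction.map Rm) ≤ Module.finrank ℝ Q.direction :=
      Submodule.finrank_map_le Rm Q.direction
    have h2 : Module.finrank ℝ Q.direction ≤ Module.finrank ℝ (Q.direction.map Rm) := by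
      conv_lhs => rw [← hmapmap]
      exact Submodule.finrank_map_le L (Q.direction.map Rm)
    omega
  -- final partition
  refine ⟨fun ℓ j => (F ℓ.castSucc j).preimage L (embL_inj d).injOn, P', ?_, ?_, ?_⟩
  · exact ⟨Rm z, AffineSubspace.mem_map.2 ⟨z, hzQ, rfl⟩⟩
  · exact hP'rank
  · intro ℓ
    obtain ⟨hdisj, hbi, hcolF, hconvF⟩ := hprop ℓ.castSucc
    refine ⟨?_, ?_, ?_, ?_⟩
    · intro j j' hjj'
      rw [Finset.disjoint_left]
      intro x hx hx'
      rw [Finset.mem_preimage] at hx hx'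
      exact (Finset.disjoint_left.1 (hdisj j j' hjj')) hx hx'
    · ext x
      rw [Finset.mem_biUnion]
      constructor
      · rintro ⟨j, _, hj⟩
        rw [Finset.mem_preimage] at hj
        have : L x ∈ D ℓ.castSucc := by
          rw [← hbi]
          exact Finset.mem_biUnion.2 ⟨j, Finset.mem_univ _, hj⟩
        rw [hDcast] at this
        obtain ⟨y', hy', hLy⟩ := Finset.mem_image.1 this
        rwa [← embL_inj d hLy]
      · intro hx
        have : L x ∈ D ℓ.castSucc := by
          rw [hDcast]; exact Finset.mem_image_of_mem _ hx
        rw [← hbi] at this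
        obtain ⟨j, _, hj⟩ := Finset.mem_biUnion.1 this
        exact ⟨j, Finset.mem_univ _, Finset.mem_preimage.2 hj⟩
    · intro i j
      have : ((F ℓ.castSucc j).preimage L (embL_inj d).injOn).filter (fun x => col ℓ x = i)
          ⊆ ((F ℓ.castSucc j).filter (fun x => col' ℓ.castSucc x = i)).preimage L
            (embL_inj d).injOn := by
        intro x hx
        rw [Finset.mem_filter, Finset.mem_preimage] at hx
        rw [Finset.mem_preimage, Finset.mem_filter]
        exact ⟨hx.1, by rw [hcol'cast, hRm, resL_embL]; exact hx.2⟩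
      calc _ ≤ (((F ℓ.castSucc j).filter (fun x => col' ℓ.castSucc x = i)).preimage L
            (embL_inj d).injOn).card := Finset.card_le_card this
        _ ≤ ((F ℓ.castSucc j).filter (fun x => col' ℓ.castSucc x = i)).card :=
            Finset.card_le_card_of_injOn L (fun x hx => Finset.mem_preimage.1 hx)
              ((embL_inj d).injOn)
        _ ≤ 1 := hcolF i j
    · intro j
      obtain ⟨w, hwP, hwconv⟩ := hconvF j
      have hwH : w ∈ H := hFconvH ℓ j hwconv
      have hwQ : w ∈ Q := ⟨hwP, hwH⟩
      refine ⟨Rm w, AffineSubspace.mem_map.2 ⟨w, hwQ, rfl⟩, ?_⟩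
      have himg : Rm '' (F ℓ.castSucc j : Set E)
          = (((F ℓ.castSucc j).preimage L (embL_inj d).injOn : Finset _) : Set _) := by
        ext u
        simp only [Set.mem_image, Finset.coe_preimage, Set.mem_preimage, Finset.mem_coe]
        constructor
        · rintro ⟨v, hv, rfl⟩
          have hvH : v ∈ H := hFsub ℓ j hv
          rwa [show L (Rm v) = v from by rw [hL, hRm]; exact embL_resL d v ((hmemH v).1 hvH)]
        · intro hu
          exact ⟨L u, hu, by rw [hRm, hL, resL_embL]⟩
      have hmem : Rm w ∈ Rm '' (convexHull ℝ (F ℓ.castSucc j : Set E)) :=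
        Set.mem_image_of_mem _ hwconv
      rw [Rm.image_convexHull, himg] at hmem
      exact hmem
end

section
/- Tightness construction in ℝ^{d-k} (single configuration): let r ≥ 2 and n = d-k ≥ 1. Place a point set C consisting of r-1 copies at each of the n+1 vertices of an n-simplex σ in ℝ^n together with one point at the centroid c of σ, so |C| = (r-1)(n+1)+1. Then every partition of C into r nonempty parts whose convex hulls have a common point has the centroid c as its unique common point; i.e., the only Tverberg point of C is c. -/
/-- Tightness construction in `ℝ^n` (`n = d - k`): let `C` consist of `r-1` points at each
of the `n+1` vertices of an `n`-simplex together with one point at the centroid `c`.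
Then every partition of `C` into `r` nonempty parts whose convex hulls have a common
point has `c` as this point; i.e. the only Tverberg point of `C` is `c`. -/
theorem unique_tverberg_point_of_standard_configuration
    (n r : ℕ) (hn : 1 ≤ n) (hr : 2 ≤ r)
    (v : Fin (n + 1) → EuclideanSpace ℝ (Fin n))
    (hv : AffineIndependent ℝ v)
    (c : EuclideanSpace ℝ (Fin n))
    (hc : c = Finset.centroid ℝ Finset.univ v)
    (f : (Fin (n + 1) × Fin (r - 1)) ⊕ Unit → EuclideanSpace ℝ (Fin n))
    (hf₁ : ∀ i m, f (Sum.inl (i, m)) = v i)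
    (hf₂ : f (Sum.inr ()) = c)
    (F : Fin r → Finset ((Fin (n + 1) × Fin (r - 1)) ⊕ Unit))
    (hdisj : ∀ j j', j ≠ j' → Disjoint (F j) (F j'))
    (hcover : Finset.univ.biUnion F = Finset.univ)
    (hne : ∀ j, (F j).Nonempty)
    (p : EuclideanSpace ℝ (Fin n))
    (hp : ∀ j, p ∈ convexHull ℝ (f '' (F j : Set ((Fin (n + 1) × Fin (r - 1)) ⊕ Unit)))) :
    p = c := by
  classical
  have hcard : Fintype.card (Fin (n + 1))
      = Module.finrank ℝ (EuclideanSpace ℝ (Fin n)) + 1 := by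
    simp [finrank_euclideanSpace]
  have htop : affineSpan ℝ (Set.range v) = ⊤ :=
    hv.affineSpan_eq_top_iff_card_eq_finrank_add_one.mpr hcard
  let b : AffineBasis (Fin (n + 1)) ℝ (EuclideanSpace ℝ (Fin n)) := ⟨v, hv, htop⟩
  have hbv : ∀ i, b i = v i := fun _ => rfl
  have hcv : ∀ i k, b.coord i (v k) = if i = k then 1 else 0 := by
    intro i k; rw [← hbv k]; exact b.coord_apply i k
  -- coordinates of the centroid
  have hcc : ∀ i, b.coord i c = ((n : ℝ) + 1)⁻¹ := by
    intro i
    have hw1 : ∑ k, (Finset.univ.centroidWeights ℝ : Fin (n + 1) → ℝ) k = 1 :=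
      Finset.univ.sum_centroidWeights_eq_one_of_nonempty ℝ ⟨0, Finset.mem_univ 0⟩
    have : c = Finset.univ.affineCombination ℝ b (Finset.univ.centroidWeights ℝ) := by
      rw [hc, Finset.centroid_def]; rfl
    rw [this, b.coord_apply_combination_of_mem (Finset.mem_univ i) hw1]
    simp [Finset.centroidWeights_apply]
  -- coordinates of generators are nonnegative
  have hnonneg : ∀ (i : Fin (n + 1)) (x), 0 ≤ b.coord i (f x) := by
    rintro i (⟨k, m⟩ | u)
    · rw [hf₁, hcv]; split <;> norm_num
    · cases u; rw [hf₂, hcc]; positivity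
  -- if some part misses the centroid point and all copies of vertex i, then coord i p = 0
  have hzero : ∀ (i : Fin (n + 1)) (j : Fin r), Sum.inr () ∉ F j →
      (∀ m, Sum.inl (i, m) ∉ F j) → b.coord i p = 0 := by
    intro i j hjr hjm
    have hsub : f '' (F j : Set _) ⊆ (b.coord i) ⁻¹' {0} := by
      rintro - ⟨x, hx, rfl⟩
      rcases x with ⟨k, m⟩ | u
      · have hki : i ≠ k := by
          intro h; exact hjm m (by rw [← h] at hx; exact hx)
        simp [hf₁, hcv, hki]
      · cases u; exact absurd hx hjr
    have := convexHull_min hsub ((convex_singleton (0 : ℝ)).affine_preimage (b.coord i)) (hp j)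
    simpa using this
  -- counting: if every other part holds a copy of vertex i, then part j0 holds none
  have hcount : ∀ (i : Fin (n + 1)) (j0 : Fin r),
      (∀ j, j ≠ j0 → ∃ m, Sum.inl (i, m) ∈ F j) → ∀ m, Sum.inl (i, m) ∉ F j0 := by
    intro i j0 hall m hm
    have hchoice : ∀ j : Fin r, ∃ m', Sum.inl (i, m') ∈ F j := by
      intro j
      by_cases h : j = j0
      · exact ⟨m, h ▸ hm⟩
      · exact hall j h
    choose g hg using hchoice
    have hginj : Function.Injective g := by
      intro j j' h
      by_contra hne'
      exact (Finset.disjoint_left.mp (hdisj j j' hne')) (hg j) (h ▸ hg j')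
    have := Fintype.card_le_of_injective g hginj
    simp only [Fintype.card_fin] at this
    omega
  -- the part containing the centroid point
  obtain ⟨j0, -, hj0⟩ : ∃ j0 ∈ Finset.univ, Sum.inr () ∈ F j0 :=
    Finset.mem_biUnion.mp (hcover ▸ Finset.mem_univ (Sum.inr () : _))
  by_cases hA : ∀ i : Fin (n + 1), ∀ j, j ≠ j0 → ∃ m, Sum.inl (i, m) ∈ F j
  · -- the centroid part is exactly {inr ()}, so p = c
    have hsub : f '' (F j0 : Set _) ⊆ {c} := by
      rintro - ⟨x, hx, rfl⟩
      rcases x with ⟨k, m⟩ | u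
      · exact absurd hx (hcount k j0 (hA k) m)
      · cases u; simp [hf₂]
    have := convexHull_mono hsub (hp j0)
    rwa [convexHull_singleton, Set.mem_singleton_iff] at this
  · exfalso
    push_neg at hA
    obtain ⟨i0, j1, hj1ne, hj1⟩ := hA
    have hj1r : Sum.inr () ∉ F j1 :=
      fun h => (Finset.disjoint_left.mp (hdisj j1 j0 hj1ne)) h hj0
    have hti0 : b.coord i0 p = 0 := hzero i0 j1 hj1r hj1
    -- weights representation of p over the centroid part
    have hmem := hp j0
    rw [convexHull_eq] at hmem
    obtain ⟨ι, t, w, z, hw0, hw1, hz, hcm⟩ := hmem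
    have hpc : p = t.affineCombination ℝ z w := by
      rw [← hcm, affineCombination_eq_centerMass hw1]
    have hcoord : ∀ i', b.coord i' p = ∑ k ∈ t, w k * b.coord i' (z k) := by
      intro i'
      rw [hpc, Finset.map_affineCombination _ _ _ hw1 (b.coord i'),
        Finset.affineCombination_eq_linear_combination _ _ _ hw1]
      simp [Function.comp]
    have hterm0 : ∀ k ∈ t, w k * b.coord i0 (z k) = 0 := by
      have hsum0 : ∑ k ∈ t, w k * b.coord i0 (z k) = 0 := by rw [← hcoord]; exact hti0
      have hnn : ∀ k ∈ t, 0 ≤ w k * b.coord i0 (z k) := by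
        intro k hk
        obtain ⟨x, -, hx⟩ := hz k hk
        exact mul_nonneg (hw0 k hk) (hx ▸ hnonneg i0 x)
      exact (Finset.sum_eq_zero_iff_of_nonneg hnn).mp hsum0
    -- weight at the centroid vanishes
    have hwc : ∀ k ∈ t, z k = c → w k = 0 := by
      intro k hk hzk
      have := hterm0 k hk
      rw [hzk, hcc] at this
      have hne1 : ((n : ℝ) + 1)⁻¹ ≠ 0 := by positivity
      rcases mul_eq_zero.mp this with h | h
      · exact h
      · exact absurd h hne1
    -- every coordinate of p vanishes
    have hall0 : ∀ i' : Fin (n + 1), b.coord i' p = 0 := by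
      intro i'
      by_cases hB : ∀ j, j ≠ j0 → ∃ m, Sum.inl (i', m) ∈ F j
      · -- no copy of i' in the centroid part
        have hnotin := hcount i' j0 hB
        rw [hcoord i']
        apply Finset.sum_eq_zero
        intro k hk
        obtain ⟨x, hxF, hx⟩ := hz k hk
        rcases x with ⟨kk, m⟩ | u
        · have hkk : i' ≠ kk := by
            intro h; exact hnotin m (by rw [← h] at hxF; exact hxF)
          rw [← hx, hf₁, hcv]
          simp [hkk]
        · cases u
          rw [hwc k hk (by rw [← hx, hf₂]), zero_mul]
      · push_neg at hB
        obtain ⟨j2, hj2ne, hj2⟩ := hB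
        exact hzero i' j2
          (fun h => (Finset.disjoint_left.mp (hdisj j2 j0 hj2ne)) h hj0) hj2
    have := b.sum_coord_apply_eq_one p
    rw [Finset.sum_congr rfl fun i _ => hall0 i] at this
    simp at this
end
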